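/- Let Δ_1,...,Δ_n be independent {0,1}-valued random variables with P(Δ_i = 1) = p_i and P(Δ_i = 0) = q_i = 1 − p_i, where p_i ≤ 1/2 for every i. Let ξ_1 = Σ_{i=1}^n Δ_i and ξ_2 = n − ξ_1, and let C be a positive integer with P(ξ_1 < C and ξ_2 < C) > 0. Then for every integer x with max(n/2, n − C) ≤ x < C, one has P(ξ_1 = x | ξ_1 < C, ξ_2 < C) ≤ P(ξ_2 = x | ξ_1 < C, ξ_2 < C). -/

import Mathlib

open MeasureTheory ProbabilityTheory Finset
open scoped ENNReal


lemma aux_comb {ι : Type*} [Fintype ι] [DecidableEq ι] (p q : ι → ℝ≥0∞)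
    (hpq : ∀ i, p i ≤ q i) (k m : ℕ) (hm : m ≤ k) (hn : k + m = Fintype.card ι) :
    ∑ A ∈ Finset.powersetCard k (univ : Finset ι), (∏ i ∈ A, p i) * ∏ i ∈ Aᶜ, q i ≤
      ∑ A ∈ Finset.powersetCard m (univ : Finset ι), (∏ i ∈ A, p i) * ∏ i ∈ Aᶜ, q i := by
  set w : Finset ι → ℝ≥0∞ := fun A => (∏ i ∈ A, p i) * ∏ i ∈ Aᶜ, q i with hw
  have hc0 : (k.choose m : ℝ≥0∞) ≠ 0 := by exact_mod_cast (Nat.choose_pos hm).ne'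
  have hcT : (k.choose m : ℝ≥0∞) ≠ ⊤ := ENNReal.natCast_ne_top _
  rw [← ENNReal.mul_le_mul_iff_right hc0 hcT]
  have h1 : (k.choose m : ℝ≥0∞) * ∑ A ∈ powersetCard k (univ : Finset ι), w A
      = ∑ x ∈ (powersetCard k (univ : Finset ι)).sigma (fun A => powersetCard m A), w x.1 := by
    rw [Finset.sum_sigma, Finset.mul_sum]
    refine Finset.sum_congr rfl fun A hA => ?_
    show (k.choose m : ℝ≥0∞) * w A = ∑ _s ∈ powersetCard m A, w A
    rw [Finset.sum_const, nsmul_eq_mul, Finset.card_powersetCard,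
      (Finset.mem_powersetCard.mp hA).2]
  have h2 : (k.choose m : ℝ≥0∞) * ∑ A ∈ powersetCard m (univ : Finset ι), w A
      = ∑ x ∈ (powersetCard m (univ : Finset ι)).sigma (fun D => powersetCard m Dᶜ), w x.1 := by
    rw [Finset.sum_sigma, Finset.mul_sum]
    refine Finset.sum_congr rfl fun D hD => ?_
    show (k.choose m : ℝ≥0∞) * w D = ∑ _s ∈ powersetCard m Dᶜ, w D
    rw [Finset.sum_const, nsmul_eq_mul, Finset.card_powersetCard, Finset.card_compl,
      (Finset.mem_powersetCard.mp hD).2, ← hn, Nat.add_sub_cancel]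
  rw [h1, h2]
  have hstep : ∑ x ∈ (powersetCard k (univ : Finset ι)).sigma (fun A => powersetCard m A), w x.1
      = ∑ y ∈ (powersetCard m (univ : Finset ι)).sigma (fun D => powersetCard m Dᶜ), w y.2ᶜ := by
    refine Finset.sum_nbij' (i := fun x => ⟨x.2, x.1ᶜ⟩) (j := fun y => ⟨y.2ᶜ, y.1⟩) ?_ ?_ ?_ ?_ ?_
    · rintro ⟨A, B⟩ hx
      simp only [Finset.mem_sigma, Finset.mem_powersetCard] at hx ⊢
      obtain ⟨⟨-, hAk⟩, hBA, hBm⟩ := hx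
      refine ⟨⟨Finset.subset_univ _, hBm⟩, ?_, ?_⟩
      · exact Finset.compl_subset_compl.mpr hBA
      · rw [Finset.card_compl, hAk, ← hn, Nat.add_sub_cancel_left]
    · rintro ⟨D, B'⟩ hy
      simp only [Finset.mem_sigma, Finset.mem_powersetCard] at hy ⊢
      obtain ⟨⟨-, hDm⟩, hBD, hBm⟩ := hy
      refine ⟨⟨Finset.subset_univ _, ?_⟩, ?_, hDm⟩
      · rw [Finset.card_compl, hBm, ← hn, Nat.add_sub_cancel]
      · rwa [← Finset.subset_compl_comm]
    · rintro ⟨A, B⟩ hx; simp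
    · rintro ⟨D, B'⟩ hy; simp
    · rintro ⟨A, B⟩ hx; simp
  rw [hstep]
  refine Finset.sum_le_sum ?_
  rintro ⟨D, B'⟩ hy
  simp only [Finset.mem_sigma, Finset.mem_powersetCard] at hy
  obtain ⟨⟨-, hDm⟩, hBD, hBm⟩ := hy
  have hDB : D ⊆ B'ᶜ := Finset.subset_compl_comm.mp hBD
  have hsd : B'ᶜ \ D = Dᶜ \ B' := by
    ext i; simp only [Finset.mem_sdiff, Finset.mem_compl]; tauto
  simp only [hw, compl_compl]
  calc (∏ i ∈ B'ᶜ, p i) * ∏ i ∈ B', q i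
      = (∏ i ∈ D, p i) * ((∏ i ∈ B'ᶜ \ D, p i) * ∏ i ∈ B', q i) := by
        rw [← Finset.prod_sdiff hDB]; ring
    _ ≤ (∏ i ∈ D, p i) * ((∏ i ∈ Dᶜ \ B', q i) * ∏ i ∈ B', q i) := by
        have hple : ∏ i ∈ B'ᶜ \ D, p i ≤ ∏ i ∈ Dᶜ \ B', q i := by
          rw [← hsd]; exact Finset.prod_le_prod' fun i _ => hpq i
        exact mul_le_mul_right (mul_le_mul_left hple _) _
    _ = (∏ i ∈ D, p i) * ∏ i ∈ Dᶜ, q i := by rw [Finset.prod_sdiff hBD]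


lemma aux_meas {Ω : Type*} [MeasurableSpace Ω] (P : Measure Ω) [IsProbabilityMeasure P]
    (n : ℕ) (Δ : Fin n → Ω → ℝ)
    (hmeas : ∀ i, Measurable (Δ i))
    (h01 : ∀ i ω, Δ i ω = 0 ∨ Δ i ω = 1)
    (hindep : iIndepFun Δ P) (y : ℕ) :
    P {ω | ∑ i, Δ i ω = (y : ℝ)} =
      ∑ A ∈ Finset.powersetCard y (univ : Finset (Fin n)),
        (∏ i ∈ A, P {ω | Δ i ω = 1}) * ∏ i ∈ Aᶜ, P {ω | Δ i ω = 0} := by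
  classical
  set E : Finset (Fin n) → Set Ω :=
    fun A => ⋂ i, Δ i ⁻¹' {if i ∈ A then (1 : ℝ) else 0} with hE
  have hmemE : ∀ (ω : Ω) (A : Finset (Fin n)),
      ω ∈ E A ↔ A = univ.filter (fun i => Δ i ω = 1) := by
    intro ω A
    simp only [hE, Set.mem_iInter, Set.mem_preimage, Set.mem_singleton_iff]
    constructor
    · intro h
      ext i
      simp only [Finset.mem_filter, Finset.mem_univ, true_and]
      constructor
      · intro hi; simpa [hi] using h i
      · intro hi
        by_contra hiA
        have := h i
        rw [if_neg hiA] at this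
        rw [this] at hi
        norm_num at hi
    · rintro rfl i
      by_cases hi : Δ i ω = 1
      · simp [hi]
      · rcases h01 i ω with h0 | h1
        · simp [hi, h0]
        · exact absurd h1 hi
  have hsum : ∀ ω : Ω, ∑ i, Δ i ω = ((univ.filter (fun i => Δ i ω = 1)).card : ℝ) := by
    intro ω
    rw [← Finset.sum_boole]
    refine Finset.sum_congr rfl fun i _ => ?_
    rcases h01 i ω with h0 | h1
    · simp [h0]
    · simp [h1]
  have hset : {ω | ∑ i, Δ i ω = (y : ℝ)}
      = ⋃ A ∈ Finset.powersetCard y (univ : Finset (Fin n)), E A := by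
    ext ω
    simp only [Set.mem_setOf_eq, Set.mem_iUnion, Finset.mem_powersetCard]
    constructor
    · intro h
      refine ⟨univ.filter (fun i => Δ i ω = 1), ⟨Finset.subset_univ _, ?_⟩, (hmemE ω _).mpr rfl⟩
      have := hsum ω
      rw [h] at this
      exact_mod_cast this.symm
    · rintro ⟨A, ⟨-, hcard⟩, hω⟩
      rw [hsum ω, ← (hmemE ω A).mp hω, hcard]
  have hEmeas : ∀ A, MeasurableSet (E A) := fun A =>
    MeasurableSet.iInter fun i => (hmeas i) (measurableSet_singleton _)
  rw [hset, measure_biUnion_finset ?_ (fun A _ => hEmeas A)]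
  · refine Finset.sum_congr rfl fun A _ => ?_
    have : P (E A) = ∏ i, P (Δ i ⁻¹' {if i ∈ A then (1 : ℝ) else 0}) :=
      hindep.meas_iInter fun i => ⟨{if i ∈ A then (1 : ℝ) else 0}, measurableSet_singleton _, rfl⟩
    rw [this, ← Finset.prod_mul_prod_compl A]
    congr 1
    · refine Finset.prod_congr rfl fun i hi => ?_
      rw [if_pos hi]
      rfl
    · refine Finset.prod_congr rfl fun i hi => ?_
      rw [if_neg (Finset.mem_compl.mp hi)]
      rfl
  · intro A hA B hB hAB
    rw [Function.onFun]
    rw [Set.disjoint_left]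
    intro ω hωA hωB
    exact hAB (((hmemE ω A).mp hωA).trans ((hmemE ω B).mp hωB).symm)

/-- Lemma 3, second part: for independent Bernoulli variables Δ₁,...,Δₙ with
success probabilities `p i ≤ 1/2`, letting `ξ₁ = ∑ Δ i` and `ξ₂ = n - ξ₁`, and a
positive integer capacity `C` with `P(ξ₁ < C, ξ₂ < C) > 0`, for every integer `x`
with `max(n/2, n - C) ≤ x < C` we have
`P(ξ₁ = x ∣ ξ₁ < C, ξ₂ < C) ≤ P(ξ₂ = x ∣ ξ₁ < C, ξ₂ < C)`,
where `P(A ∣ B) = P(A ∩ B) / P(B)`. -/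
theorem bernoulli_sum_cond_pmf_le_of_half_le
    {Ω : Type*} [MeasurableSpace Ω] (P : Measure Ω) [IsProbabilityMeasure P]
    (n : ℕ) (Δ : Fin n → Ω → ℝ) (p : Fin n → ℝ)
    (hmeas : ∀ i, Measurable (Δ i))
    (h01 : ∀ i ω, Δ i ω = 0 ∨ Δ i ω = 1)
    (hlaw : ∀ i, P {ω | Δ i ω = 1} = ENNReal.ofReal (p i))
    (hp : ∀ i, p i ≤ 1 / 2)
    (hindep : iIndepFun Δ P)
    (C : ℕ) (hC : 0 < C)
    (hB : 0 < P {ω | ∑ i, Δ i ω < (C : ℝ) ∧ (n : ℝ) - ∑ i, Δ i ω < (C : ℝ)})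
    (x : ℕ) (hx₁ : (n : ℝ) / 2 ≤ x) (hx₂ : (n : ℝ) - (C : ℝ) ≤ x) (hx₃ : x < C) :
    P ({ω | ∑ i, Δ i ω = (x : ℝ)} ∩
        {ω | ∑ i, Δ i ω < (C : ℝ) ∧ (n : ℝ) - ∑ i, Δ i ω < (C : ℝ)}) /
      P {ω | ∑ i, Δ i ω < (C : ℝ) ∧ (n : ℝ) - ∑ i, Δ i ω < (C : ℝ)} ≤
    P ({ω | (n : ℝ) - ∑ i, Δ i ω = (x : ℝ)} ∩
        {ω | ∑ i, Δ i ω < (C : ℝ) ∧ (n : ℝ) - ∑ i, Δ i ω < (C : ℝ)}) /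
      P {ω | ∑ i, Δ i ω < (C : ℝ) ∧ (n : ℝ) - ∑ i, Δ i ω < (C : ℝ)} := by
  classical
  set S : Set Ω := {ω | ∑ i, Δ i ω < (C : ℝ) ∧ (n : ℝ) - ∑ i, Δ i ω < (C : ℝ)} with hS
  -- basic facts about the individual probabilities
  have hcompl : ∀ i, {ω | Δ i ω = 0} = {ω | Δ i ω = 1}ᶜ := by
    intro i
    ext ω
    simp only [Set.mem_setOf_eq, Set.mem_compl_iff]
    constructor
    · intro h0 h1; rw [h0] at h1; norm_num at h1
    · intro h1; rcases h01 i ω with h | h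
      · exact h
      · exact absurd h h1
  have hpq : ∀ i, P {ω | Δ i ω = 1} ≤ P {ω | Δ i ω = 0} := by
    intro i
    have hmeas1 : MeasurableSet {ω | Δ i ω = 1} := (hmeas i) (measurableSet_singleton 1)
    have hPle : P {ω | Δ i ω = 1} ≤ 2⁻¹ := by
      rw [hlaw i]
      calc ENNReal.ofReal (p i) ≤ ENNReal.ofReal (1 / 2) := ENNReal.ofReal_le_ofReal (hp i)
        _ = 2⁻¹ := by rw [ENNReal.ofReal_div_of_pos (by norm_num)]; norm_num
    have hq : P {ω | Δ i ω = 0} = 1 - P {ω | Δ i ω = 1} := by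
      rw [hcompl i, prob_compl_eq_one_sub hmeas1]
    rw [hq]
    calc P {ω | Δ i ω = 1} ≤ 1 - 2⁻¹ := by
          rw [ENNReal.one_sub_inv_two]; exact hPle
      _ ≤ 1 - P {ω | Δ i ω = 1} := tsub_le_tsub_left hPle 1
  -- bound each Δ by 1, so the sum is at most n
  have hsum_le : ∀ ω, ∑ i, Δ i ω ≤ (n : ℝ) := by
    intro ω
    calc ∑ i, Δ i ω ≤ ∑ _i : Fin n, (1 : ℝ) :=
          Finset.sum_le_sum fun i _ => by rcases h01 i ω with h | h <;> rw [h] <;> norm_num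
      _ = n := by simp
  by_cases hxn : x ≤ n
  · -- main case
    set y : ℕ := n - x with hy
    have hyx : (y : ℝ) = (n : ℝ) - x := by
      rw [hy, Nat.cast_sub hxn]
    have hset2 : {ω | (n : ℝ) - ∑ i, Δ i ω = (x : ℝ)} = {ω | ∑ i, Δ i ω = (y : ℝ)} := by
      ext ω
      simp only [Set.mem_setOf_eq]
      constructor <;> intro h <;> rw [hyx] at * <;> linarith
    have hyleC : (y : ℝ) ≤ (C : ℝ) := by rw [hyx]; linarith
    rcases lt_or_eq_of_le hyleC with hyC | hyC
    · -- n - x < C : the conditioning event contains both events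
      have hsub1 : {ω | ∑ i, Δ i ω = (x : ℝ)} ⊆ S := by
        intro ω hω
        simp only [Set.mem_setOf_eq] at hω
        constructor
        · rw [hω]; exact_mod_cast hx₃
        · rw [hω, ← hyx]; exact hyC
      have hsub2 : {ω | ∑ i, Δ i ω = (y : ℝ)} ⊆ S := by
        intro ω hω
        simp only [Set.mem_setOf_eq] at hω
        constructor
        · rw [hω]; exact hyC
        · rw [hω, hyx]
          have : (x : ℝ) < C := by exact_mod_cast hx₃
          linarith
      rw [hset2, Set.inter_eq_left.mpr hsub1, Set.inter_eq_left.mpr hsub2]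
      refine ENNReal.div_le_div_right ?_ _
      rw [aux_meas P n Δ hmeas h01 hindep x, aux_meas P n Δ hmeas h01 hindep y]
      refine aux_comb _ _ hpq x y ?_ ?_
      · -- y ≤ x
        have hn2x : (n : ℝ) ≤ 2 * x := by linarith
        have : n ≤ 2 * x := by exact_mod_cast hn2x
        omega
      · rw [Fintype.card_fin]; omega
    · -- n - x = C : the left event misses the conditioning event
      have hempty : {ω | ∑ i, Δ i ω = (x : ℝ)} ∩ S = ∅ := by
        ext ω
        simp only [Set.mem_inter_iff, Set.mem_setOf_eq, Set.mem_empty_iff_false, iff_false,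
          not_and, hS]
        intro hω h2
        rw [hω, ← hyx, hyC]
        exact lt_irrefl _
      rw [hempty]
      simp only [measure_empty, ENNReal.zero_div]
      exact zero_le
  · -- x > n : the left event is empty
    push_neg at hxn
    have hempty : {ω | ∑ i, Δ i ω = (x : ℝ)} = ∅ := by
      ext ω
      simp only [Set.mem_setOf_eq, Set.mem_empty_iff_false, iff_false]
      intro h
      have := hsum_le ω
      rw [h] at this
      have : (n : ℝ) < x := by exact_mod_cast hxn
      linarith [hsum_le ω]
    rw [hempty]
    simp only [Set.empty_inter, measure_empty, ENNReal.zero_div]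
    exact zero_le
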